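/- Let (X,Σ,μ) be a measure space and 1 ≤ p < ∞. Suppose a family 𝓕 ⊆ Λ^p(X) satisfies: (i) lim_{M→∞} sup_{f∈𝓕} ν_p(f − T_M f) = 0, and (ii) for every M > 0 the truncated family T_M(𝓕) is totally bounded in L^p(X) with respect to the L^p norm distance. Then 𝓕 is totally bounded with respect to the F-norm distance d(f,g) = ν_p(f−g). -/

import Mathlib

open MeasureTheory ENNReal Filter Topology

/-- The F-norm `ν_p(g) = (∫ min(|g|,1)^p dμ)^{1/p}` of the asymptotic `L_p` space. -/
noncomputable def nuF {X : Type*} [MeasurableSpace X] (μ : Measure X) (p : ℝ) (g : X → ℝ) :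
    ℝ≥0∞ :=
  (∫⁻ x, ENNReal.ofReal (min |g x| 1 ^ p) ∂μ) ^ (1 / p)

/-- The `L^p` norm `(∫ |g|^p dμ)^{1/p}`. -/
noncomputable def lpNorm {X : Type*} [MeasurableSpace X] (μ : Measure X) (p : ℝ) (g : X → ℝ) :
    ℝ≥0∞ :=
  (∫⁻ x, ENNReal.ofReal (|g x| ^ p) ∂μ) ^ (1 / p)

/-- Membership in the asymptotic `L_p` space `Λ^p(X)`. -/
def MemLambda {X : Type*} [MeasurableSpace X] (μ : Measure X) (p : ℝ) (f : X → ℝ) : Prop :=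
  Measurable f ∧ ∫⁻ x, ENNReal.ofReal (min |f x| 1 ^ p) ∂μ < ⊤

/-- Membership in `L^p(X)`. -/
def MemLp' {X : Type*} [MeasurableSpace X] (μ : Measure X) (p : ℝ) (f : X → ℝ) : Prop :=
  Measurable f ∧ ∫⁻ x, ENNReal.ofReal (|f x| ^ p) ∂μ < ⊤

/-- The truncation map `T_M(t) = max(-M, min(t, M))`. -/
def trunc (M : ℝ) (t : ℝ) : ℝ := max (-M) (min t M)

/-- A family `F` is totally bounded with respect to a distance `d` if for every `ε > 0`
there are finitely many functions such that every `f ∈ F` is within `ε` of one of them. -/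
def TotallyBoundedDist {X : Type*} (d : (X → ℝ) → (X → ℝ) → ℝ≥0∞) (F : Set (X → ℝ)) : Prop :=
  ∀ ε : ℝ≥0∞, 0 < ε → ∃ G : Finset (X → ℝ), ∀ f ∈ F, ∃ g ∈ G, d f g < ε
lemma min_tri (a b c : ℝ) : min |a - c| 1 ≤ min |a - b| 1 + |b - c| := by
  rcases le_total (|a - b|) 1 with h | h
  · rw [min_eq_left h]
    calc min |a - c| 1 ≤ |a - c| := min_le_left _ _
      _ ≤ |a - b| + |b - c| := abs_sub_le a b c
  · rw [min_eq_right h]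
    have h1 : min |a - c| 1 ≤ 1 := min_le_right _ _
    have h2 := abs_nonneg (b - c)
    linarith

lemma add_rpow_le2 (x y : ℝ≥0∞) (p : ℝ) (hp : 0 ≤ p) :
    (x + y) ^ p ≤ 2 ^ p * (x ^ p + y ^ p) := by
  calc (x + y) ^ p ≤ (2 * max x y) ^ p := by
        apply ENNReal.rpow_le_rpow _ hp
        rw [two_mul]
        exact add_le_add (le_max_left x y) (le_max_right x y)
    _ = 2 ^ p * (max x y) ^ p := ENNReal.mul_rpow_of_nonneg _ _ hp
    _ ≤ 2 ^ p * (x ^ p + y ^ p) := by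
        gcongr
        rcases max_cases x y with ⟨h, _⟩ | ⟨h, _⟩ <;> rw [h]
        · exact le_self_add
        · exact le_add_self

theorem stmt3 {X : Type*} [MeasurableSpace X] (μ : Measure X) (p : ℝ) (hp : 1 ≤ p)
    (F : Set (X → ℝ)) (hF : ∀ f ∈ F, MemLambda μ p f)
    (h1 : Tendsto (fun M : ℝ => ⨆ f ∈ F, nuF μ p (f - trunc M ∘ f)) atTop (𝓝 0))
    (h2 : ∀ M : ℝ, 0 < M →
      TotallyBoundedDist (fun u v => lpNorm μ p (u - v)) ((fun f => trunc M ∘ f) '' F)) :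
    TotallyBoundedDist (fun f g => nuF μ p (f - g)) F := by
  have hp0 : (0:ℝ) < p := lt_of_lt_of_le one_pos hp
  have hp0' : p ≠ 0 := ne_of_gt hp0
  intro ε hε
  set ε' : ℝ≥0∞ := min ε 1 with hε'def
  have hε'pos : 0 < ε' := lt_min hε one_pos
  have hε'top : ε' ≠ ⊤ := ne_top_of_le_ne_top one_ne_top (min_le_right _ _)
  set δ : ℝ≥0∞ := ε' / 8 with hδdef
  have hδpos : 0 < δ := ENNReal.div_pos (ne_of_gt hε'pos) (by norm_num)
  -- choose M
  have hev : ∀ᶠ M : ℝ in atTop,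
      (⨆ f ∈ F, nuF μ p (f - trunc M ∘ f)) < δ ∧ (1:ℝ) ≤ M :=
    (h1.eventually (gt_mem_nhds hδpos)).and (eventually_ge_atTop 1)
  obtain ⟨M, hMsup, hM1⟩ := hev.exists
  have hMpos : (0:ℝ) < M := lt_of_lt_of_le one_pos hM1
  obtain ⟨G, hG⟩ := h2 M hMpos δ hδpos
  refine ⟨G, fun f hf => ?_⟩
  obtain ⟨g, hgG, hgclose⟩ := hG (trunc M ∘ f) ⟨f, hf, rfl⟩
  refine ⟨g, hgG, ?_⟩
  -- measurability
  have hfm : Measurable f := (hF f hf).1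
  have htr : Measurable (trunc M) :=
    measurable_const.max (measurable_id.min measurable_const)
  have hTm : Measurable (trunc M ∘ f) := htr.comp hfm
  set T : X → ℝ := trunc M ∘ f with hTdef
  -- bound on nuF (f - T)
  have hnuT : nuF μ p (f - T) < δ := by
    refine lt_of_le_of_lt ?_ hMsup
    exact le_biSup (fun f => nuF μ p (f - trunc M ∘ f)) hf
  -- main integral bound
  have key : ∫⁻ x, ENNReal.ofReal (min |(f - g) x| 1 ^ p) ∂μ ≤ 2 ^ p * 2 * δ ^ p := by
    have step1 : ∀ x, ENNReal.ofReal (min |(f - g) x| 1 ^ p) ≤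
        2 ^ p * ((ENNReal.ofReal (min |(f - T) x| 1)) ^ p + (ENNReal.ofReal |(T - g) x|) ^ p) := by
      intro x
      have hmn : (0:ℝ) ≤ min |(f - g) x| 1 := le_min (abs_nonneg _) one_pos.le
      rw [← ENNReal.ofReal_rpow_of_nonneg hmn hp0.le]
      calc (ENNReal.ofReal (min |(f - g) x| 1)) ^ p
          ≤ (ENNReal.ofReal (min |(f - T) x| 1) + ENNReal.ofReal |(T - g) x|) ^ p := by
            apply ENNReal.rpow_le_rpow _ hp0.le
            rw [← ENNReal.ofReal_add (le_min (abs_nonneg _) one_pos.le) (abs_nonneg _)]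
            apply ENNReal.ofReal_le_ofReal
            simpa [Pi.sub_apply] using min_tri (f x) (T x) (g x)
        _ ≤ 2 ^ p * ((ENNReal.ofReal (min |(f - T) x| 1)) ^ p + (ENNReal.ofReal |(T - g) x|) ^ p) :=
            add_rpow_le2 _ _ p hp0.le
    calc ∫⁻ x, ENNReal.ofReal (min |(f - g) x| 1 ^ p) ∂μ
        ≤ ∫⁻ x, 2 ^ p * ((ENNReal.ofReal (min |(f - T) x| 1)) ^ p
            + (ENNReal.ofReal |(T - g) x|) ^ p) ∂μ := lintegral_mono step1
      _ = 2 ^ p * (∫⁻ x, ((ENNReal.ofReal (min |(f - T) x| 1)) ^ p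
            + (ENNReal.ofReal |(T - g) x|) ^ p) ∂μ) := by
          exact lintegral_const_mul' _ _ (by simp [ENNReal.rpow_ne_top_of_nonneg hp0.le])
      _ = 2 ^ p * ((∫⁻ x, (ENNReal.ofReal (min |(f - T) x| 1)) ^ p ∂μ)
            + ∫⁻ x, (ENNReal.ofReal |(T - g) x|) ^ p ∂μ) := by
          congr 1
          apply lintegral_add_left
          exact (((hfm.sub hTm).abs.min measurable_const).ennreal_ofReal).pow_const p
      _ ≤ 2 ^ p * (δ ^ p + δ ^ p) := by
          gcongr 2 ^ p * (?_ + ?_)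
          · have : (∫⁻ x, (ENNReal.ofReal (min |(f - T) x| 1)) ^ p ∂μ) = nuF μ p (f - T) ^ p := by
              rw [nuF, ← ENNReal.rpow_mul, one_div_mul_cancel hp0', ENNReal.rpow_one]
              congr 1
              ext x
              rw [ENNReal.ofReal_rpow_of_nonneg (le_min (abs_nonneg _) one_pos.le) hp0.le]
            rw [this]
            exact ENNReal.rpow_le_rpow hnuT.le hp0.le
          · have : (∫⁻ x, (ENNReal.ofReal |(T - g) x|) ^ p ∂μ) = lpNorm μ p (T - g) ^ p := by
              rw [_root_.lpNorm, ← ENNReal.rpow_mul, one_div_mul_cancel hp0', ENNReal.rpow_one]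
              congr 1
              ext x
              rw [ENNReal.ofReal_rpow_of_nonneg (abs_nonneg _) hp0.le]
            rw [this]
            exact ENNReal.rpow_le_rpow hgclose.le hp0.le
      _ = 2 ^ p * 2 * δ ^ p := by ring
  -- conclude
  have hfinal : nuF μ p (f - g) ≤ 2 * 2 * δ := by
    calc nuF μ p (f - g) ≤ (2 ^ p * 2 * δ ^ p) ^ (1/p) :=
          ENNReal.rpow_le_rpow key (by positivity)
      _ = 2 * 2 ^ (1/p) * δ := by
          rw [ENNReal.mul_rpow_of_nonneg _ _ (by positivity),
            ENNReal.mul_rpow_of_nonneg _ _ (by positivity),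
            ← ENNReal.rpow_mul, ← ENNReal.rpow_mul, mul_one_div_cancel hp0',
            ENNReal.rpow_one, ENNReal.rpow_one]
      _ ≤ 2 * 2 * δ := by
          gcongr
          calc (2:ℝ≥0∞) ^ (1/p) ≤ 2 ^ (1:ℝ) :=
                ENNReal.rpow_le_rpow_of_exponent_le one_le_two
                  (by rw [div_le_one hp0]; exact hp)
            _ = 2 := ENNReal.rpow_one 2
  have h4δ : (2:ℝ≥0∞) * 2 * δ < ε := by
    have heq : (2:ℝ≥0∞) * 2 * δ = ε' / 2 := by
      rw [hδdef, ← mul_div_assoc]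
      rw [show ((8:ℝ≥0∞)) = (2*2) * 2 by norm_num,
        show ((2:ℝ≥0∞) * 2 * ε') = (2*2) * ε' by ring,
        ENNReal.mul_div_mul_left _ _ (by norm_num) (by norm_num)]
    rw [heq]
    exact lt_of_lt_of_le (ENNReal.half_lt_self (ne_of_gt hε'pos) hε'top) (min_le_left _ _)
  exact lt_of_le_of_lt hfinal h4δ
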